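/- Let (B_i) be a sequence of balls in [0,1]^d ⊆ ℝ^d whose diameters tend to 0 and such that the Lebesgue measure of limsup_{i→∞} B_i equals 1. Then there exists κ₂ > 0 such that for every axis-parallel closed cube C ⊆ [0,1]^d there exists a finite subfamily of balls B_{n_1}, …, B_{n_k} with B_{n_j} ⊆ C for all j, the dilated balls 3B_{n_1}, …, 3B_{n_k} pairwise disjoint, and Σ_{j=1}^k λ(B_{n_j}) ≥ κ₂ · λ(C). -/

import Mathlib

open MeasureTheory Metric Set Filter ENNReal

/-- `limsup` of a sequence of sets: `⋂ n, ⋃ i ≥ n, A i`. -/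
def slimsup {X : Type*} (A : ℕ → Set X) : Set X :=
  ⋂ n, ⋃ i, ⋃ (_ : n ≤ i), A i

/-- The unit cube `[0,1]^d` in `ℝ^d`. -/
def unitCube (d : ℕ) : Set (EuclideanSpace ℝ (Fin d)) :=
  {x | ∀ i, x i ∈ Set.Icc (0 : ℝ) 1}

/-- The generalized singular value function
`φ^s(E) = sup_μ inf_{x ∈ E} inf_{r > 0} r^s / μ(B_r(x))`,
the supremum over Borel probability measures carried by `E`. -/
noncomputable def phi {d : ℕ} (s : ℝ) (E : Set (EuclideanSpace ℝ (Fin d))) : ℝ≥0∞ :=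
  ⨆ (μ : Measure (EuclideanSpace ℝ (Fin d))) (_ : IsProbabilityMeasure μ) (_ : μ Eᶜ = 0),
    ⨅ (x : EuclideanSpace ℝ (Fin d)) (_ : x ∈ E) (r : ℝ) (_ : 0 < r),
      ENNReal.ofReal (r ^ s) / μ (closedBall x r)

/-- Axis-parallel closed cube with center `z` and half-side `h`. -/
def cube {d : ℕ} (z : EuclideanSpace ℝ (Fin d)) (h : ℝ) : Set (EuclideanSpace ℝ (Fin d)) :=
  {x | ∀ i, |x i - z i| ≤ h}

lemma volume_cube {d : ℕ} (z : EuclideanSpace ℝ (Fin d)) {h : ℝ} (hh : 0 ≤ h) :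
    volume (cube z h) = ENNReal.ofReal ((2*h)^d) := by
  have heq : cube z h = (MeasurableEquiv.toLp 2 (Fin d → ℝ)).symm ⁻¹'
      (Set.pi Set.univ fun i => Icc (z i - h) (z i + h)) := by
    ext y
    simp only [cube, mem_setOf_eq, mem_preimage, Set.mem_pi, mem_univ, forall_true_left,
      mem_Icc, abs_le]
    have hy : ∀ i, (WithLp.equiv 2 (Fin d → ℝ)) y i = y i := fun _ => rfl
    show (∀ i, -h ≤ y i - z i ∧ y i - z i ≤ h) ↔ ∀ i, z i - h ≤ y i ∧ y i ≤ z i + h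
    exact forall_congr' fun i => by constructor <;> (intro H; constructor <;> linarith [H.1, H.2])
  rw [heq, (EuclideanSpace.volume_preserving_symm_measurableEquiv_toLp (Fin d)).measure_preimage
    ((MeasurableSet.univ_pi fun i => measurableSet_Icc).nullMeasurableSet)]
  rw [volume_pi_pi]
  simp only [Real.volume_Icc]
  have h2 : ∀ i : Fin d, z i + h - (z i - h) = 2 * h := fun i => by ring
  simp_rw [h2]
  rw [Finset.prod_const, Finset.card_univ, Fintype.card_fin,
    ← ENNReal.ofReal_pow (by linarith)]

lemma volume_unitCube (d : ℕ) : volume (unitCube d) = 1 := by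
  have h1 : unitCube d = cube (WithLp.toLp 2 (fun _ => (1/2 : ℝ)) : EuclideanSpace ℝ (Fin d)) (1/2) := by
    ext y
    simp only [unitCube, cube, mem_setOf_eq, mem_Icc, abs_le, PiLp.toLp_apply]
    exact forall_congr' fun i => by constructor <;> (intro H; constructor <;> linarith [H.1, H.2])
  rw [h1, volume_cube _ (by norm_num)]
  norm_num

lemma abs_coord_le_dist {d : ℕ} (w y : EuclideanSpace ℝ (Fin d)) (j : Fin d) :
    |w j - y j| ≤ dist w y := by
  rw [EuclideanSpace.dist_eq]
  have h1 : |w j - y j| = Real.sqrt (dist (w j) (y j) ^ 2) := by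
    rw [Real.sqrt_sq dist_nonneg, Real.dist_eq]
  rw [h1]
  apply Real.sqrt_le_sqrt
  exact Finset.single_le_sum (f := fun i => dist (w i) (y i) ^ 2)
    (fun i _ => sq_nonneg _) (Finset.mem_univ j)

/-- Lemma 4.1 (after Beresnevich–Velani): if the balls `B_i = B(x_i, r_i) ⊆ [0,1]^d` have
radii tending to `0` and `λ(limsup B_i) = 1`, then there is `κ₂ > 0` such that every
axis-parallel closed cube `C ⊆ [0,1]^d` contains a finite subfamily of the `B_i` with the
tripled balls pairwise disjoint and total volume at least `κ₂ λ(C)`. -/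
theorem exists_disjoint_subfamily_filling_cube
    (d : ℕ) (x : ℕ → EuclideanSpace ℝ (Fin d)) (r : ℕ → ℝ)
    (hr : ∀ i, 0 < r i)
    (hBcube : ∀ i, closedBall (x i) (r i) ⊆ unitCube d)
    (hdiam : Tendsto r atTop (nhds 0))
    (hfull : volume (slimsup fun i => closedBall (x i) (r i)) = 1) :
    ∃ κ₂ : ℝ, 0 < κ₂ ∧
      ∀ (z : EuclideanSpace ℝ (Fin d)) (h : ℝ), 0 < h → cube z h ⊆ unitCube d →
        ∃ (k : ℕ) (n : Fin k → ℕ), Function.Injective n ∧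
          (∀ j, closedBall (x (n j)) (r (n j)) ⊆ cube z h) ∧
          (∀ j j', j ≠ j' →
            Disjoint (closedBall (x (n j)) (3 * r (n j)))
              (closedBall (x (n j')) (3 * r (n j')))) ∧
          ENNReal.ofReal κ₂ * volume (cube z h) ≤
            ∑ j : Fin k, volume (closedBall (x (n j)) (r (n j))) := by
  classical
  refine ⟨1 / (2 * 30 ^ d), by positivity, ?_⟩
  intro z h hh hsub
  set B : ℕ → Set (EuclideanSpace ℝ (Fin d)) := fun i => closedBall (x i) (r i) with hB
  set t : Set ℕ := {i | r i ≤ h / 4 ∧ (B i ∩ cube z (h / 2)).Nonempty} with ht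
  have htsub : ∀ i ∈ t, B i ⊆ cube z h := by
    rintro i ⟨hri, y, hyB, hyC⟩ w hw j
    have h1 : |w j - y j| ≤ dist w y := abs_coord_le_dist w y j
    have h2 : dist w y ≤ dist w (x i) + dist (x i) y := dist_triangle _ _ _
    have h3 : dist w (x i) ≤ r i := hw
    have h4 : dist (x i) y ≤ r i := by rw [dist_comm]; exact hyB
    have h5 : |y j - z j| ≤ h / 2 := hyC j
    calc |w j - z j| ≤ |w j - y j| + |y j - z j| := abs_sub_le _ _ _
    _ ≤ h := by linarith
  obtain ⟨u, hut, hdisj, hcov⟩ :=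
    Vitali.exists_disjoint_subfamily_covering_enlargement_closedBall t x (fun i => 3 * r i)
      (3 * (h / 4)) (fun a ha => by linarith [ha.1]) 5 (by norm_num)
  obtain ⟨N, hNr⟩ := eventually_atTop.1 (hdiam.eventually_lt_const (by positivity : (0:ℝ) < h/4))
  have hcover : slimsup B ∩ cube z (h / 2) ⊆ ⋃ b ∈ u, closedBall (x b) (5 * (3 * r b)) := by
    rintro y ⟨hy1, hy2⟩
    have h0 : y ∈ ⋃ i, ⋃ (_ : N ≤ i), B i := mem_iInter.1 hy1 N
    obtain ⟨i, hiN, hyB⟩ : ∃ i, N ≤ i ∧ y ∈ B i := by simpa using h0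
    have hit : i ∈ t := ⟨(hNr i hiN).le, ⟨y, hyB, hy2⟩⟩
    obtain ⟨b, hbu, hsub15⟩ := hcov i hit
    refine mem_biUnion hbu (hsub15 ?_)
    exact closedBall_subset_closedBall (by linarith [hr i]) hyB
  have hmslim : MeasurableSet (slimsup B) :=
    MeasurableSet.iInter fun n => MeasurableSet.iUnion fun i => MeasurableSet.iUnion fun _ =>
      measurableSet_closedBall
  have hlim_sub : slimsup B ⊆ unitCube d := by
    intro y hy
    have h0 : y ∈ ⋃ i, ⋃ (_ : 0 ≤ i), B i := mem_iInter.1 hy 0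
    obtain ⟨i, -, hyB⟩ : ∃ i, 0 ≤ i ∧ y ∈ B i := by simpa using h0
    exact hBcube i hyB
  have hdiffzero : volume (unitCube d \ slimsup B) = 0 := by
    rw [measure_diff hlim_sub hmslim.nullMeasurableSet (by rw [hfull]; exact one_ne_top),
      hfull, volume_unitCube, tsub_self]
  have hcc : volume (cube z (h/2)) ≤ volume (slimsup B ∩ cube z (h/2)) := by
    have hsplit : cube z (h/2) ⊆ (slimsup B ∩ cube z (h/2)) ∪ (unitCube d \ slimsup B) := by
      intro y hy
      by_cases hys : y ∈ slimsup B
      · exact Or.inl ⟨hys, hy⟩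
      · exact Or.inr ⟨hsub (fun j => (hy j).trans (by linarith)), hys⟩
    calc volume (cube z (h/2)) ≤ volume ((slimsup B ∩ cube z (h/2)) ∪ (unitCube d \ slimsup B)) :=
          measure_mono hsplit
    _ ≤ volume (slimsup B ∩ cube z (h/2)) + volume (unitCube d \ slimsup B) := measure_union_le _ _
    _ = volume (slimsup B ∩ cube z (h/2)) := by rw [hdiffzero, add_zero]
  have hscale : ∀ i : ℕ, volume (closedBall (x i) (5 * (3 * r i)))
      = ENNReal.ofReal ((15:ℝ) ^ d) * volume (B i) := by
    intro i
    have h5 : (0:ℝ) ≤ 5 * (3 * r i) := by linarith [(hr i).le]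
    rw [hB]
    dsimp only
    rw [Measure.addHaar_closedBall _ _ h5, Measure.addHaar_closedBall _ _ (hr i).le,
      finrank_euclideanSpace_fin]
    have hid : ENNReal.ofReal ((5 * (3 * r i)) ^ d)
        = ENNReal.ofReal ((15:ℝ) ^ d) * ENNReal.ofReal (r i ^ d) := by
      rw [← ENNReal.ofReal_mul (by positivity : (0:ℝ) ≤ 15 ^ d), ← mul_pow]
      congr 1
      ring
    rw [hid, mul_assoc]
  have hmain : ENNReal.ofReal (h ^ d) ≤
      ENNReal.ofReal ((15:ℝ) ^ d) * ∑' (b : ↥u), volume (B ↑b) := by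
    have h1 : volume (cube z (h/2)) = ENNReal.ofReal (h ^ d) := by
      rw [volume_cube _ (by linarith : (0:ℝ) ≤ h/2), show 2*(h/2) = h by ring]
    calc ENNReal.ofReal (h^d) = volume (cube z (h/2)) := h1.symm
    _ ≤ volume (slimsup B ∩ cube z (h/2)) := hcc
    _ ≤ volume (⋃ b ∈ u, closedBall (x b) (5 * (3 * r b))) := measure_mono hcover
    _ ≤ ∑' (b : ↥u), volume (closedBall (x ↑b) (5 * (3 * r ↑b))) :=
          measure_biUnion_le volume (Set.to_countable u) _
    _ = ENNReal.ofReal ((15:ℝ) ^ d) * ∑' (b : ↥u), volume (B ↑b) := by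
          rw [← ENNReal.tsum_mul_left]; exact tsum_congr fun b => hscale b
  have hpos15 : (0:ℝ) < 15 ^ d := by positivity
  have hlt : ENNReal.ofReal (h ^ d / (2 * 15 ^ d)) < ∑' (b : ↥u), volume (B ↑b) := by
    have hS : ENNReal.ofReal (h ^ d / 15 ^ d) ≤ ∑' (b : ↥u), volume (B ↑b) := by
      rw [ENNReal.ofReal_div_of_pos hpos15, ENNReal.div_le_iff_le_mul
        (Or.inl (by simp [hpos15.ne'] : ENNReal.ofReal ((15:ℝ)^d) ≠ 0)) (Or.inl ofReal_ne_top)]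
      rw [mul_comm]
      exact hmain
    refine lt_of_lt_of_le ?_ hS
    rw [ENNReal.ofReal_lt_ofReal_iff (by positivity)]
    apply div_lt_div_of_pos_left (by positivity) hpos15
    linarith
  rw [ENNReal.tsum_eq_iSup_sum] at hlt
  obtain ⟨F, hF⟩ := lt_iSup_iff.1 hlt
  set Fn : Finset ℕ := F.map ⟨Subtype.val, Subtype.val_injective⟩ with hFn
  set e := Fn.orderIsoOfFin rfl with he
  refine ⟨Fn.card, fun j => (e j : ℕ), ?_, ?_, ?_, ?_⟩
  · intro a b hab
    exact e.injective (Subtype.ext hab)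
  all_goals {
    have hmem : ∀ j : Fin Fn.card, ((e j : ℕ)) ∈ u := by
      intro j
      have hj : ((e j : ℕ)) ∈ F.map ⟨Subtype.val, Subtype.val_injective⟩ := (e j).2
      obtain ⟨b, -, hb⟩ := Finset.mem_map.1 hj
      exact Set.mem_of_eq_of_mem hb.symm b.2
    first
    | exact fun j => htsub _ (hut (hmem j))
    | exact fun j j' hjj' => hdisj (hmem j) (hmem j')
        (fun hc => hjj' (e.injective (Subtype.ext hc)))
    | { -- sum bound
      have hsum : ∑ j : Fin Fn.card, volume (B ((e j : ℕ))) = ∑ b ∈ F, volume (B ↑b) := by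
        rw [show (∑ b ∈ F, volume (B ↑b)) = ∑ i ∈ Fn, volume (B i) from
          (Finset.sum_map F ⟨Subtype.val, Subtype.val_injective⟩ (fun i => volume (B i))).symm,
          ← Finset.sum_coe_sort Fn (fun i => volume (B i))]
        exact Fintype.sum_equiv e.toEquiv _ _ (fun j => rfl)
      rw [volume_cube _ hh.le, ← ENNReal.ofReal_mul (by positivity)]
      have hkey : 1 / (2 * 30 ^ d) * (2*h) ^ d = h ^ d / (2 * 15 ^ d) := by
        rw [mul_pow, show (30:ℝ) = 2 * 15 by norm_num, mul_pow]
        have h2d : (0:ℝ) < 2 ^ d := by positivity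
        field_simp
      rw [hkey, hsum]
      exact hF.le }
  }
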